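/- Let μ, G, L, D > 0 and T ≥ 1. Let 1 ≤ t_1 < t_2 < ⋯ < t_N ≤ T be reals and δ_1, …, δ_{N−1} ∈ (0, D] be reals such that t_{k+1} ≥ t_k · (1 + μ·δ_k/(2G + L·δ_k)) for every k = 1, …, N−1. Then ∑_{k=1}^{N−1} δ_k ≤ ((2G + (L+μ)D)/μ) · log T. -/

import Mathlib

/-- Counting step for the O(log T) movement bound of Frugal with strongly convex and
smooth losses: if the jump times `t 1 < ⋯ < t N` (reals in `[1, T]`) satisfy the
geometric recurrence `t (k+1) ≥ t k · (1 + μ·δ k / (2G + L·δ k))` with head distances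
`δ k ∈ (0, D]`, then `∑ δ k ≤ ((2G + (L+μ)D)/μ) · log T`. -/
theorem frugal_head_distance_sum_bound
    (μ G L D T : ℝ) (hμ : 0 < μ) (hG : 0 < G) (hL : 0 < L) (hD : 0 < D)
    (hT : 1 ≤ T)
    (N : ℕ) (hN : 1 ≤ N) (t : ℕ → ℝ) (δ : ℕ → ℝ)
    (ht1 : 1 ≤ t 1)
    (hmono : ∀ k ∈ Finset.Icc 1 (N - 1), t k < t (k + 1))
    (htN : t N ≤ T)
    (hδ : ∀ k ∈ Finset.Icc 1 (N - 1), 0 < δ k ∧ δ k ≤ D)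
    (hrec : ∀ k ∈ Finset.Icc 1 (N - 1),
      t k * (1 + μ * δ k / (2 * G + L * δ k)) ≤ t (k + 1)) :
    ∑ k ∈ Finset.Icc 1 (N - 1), δ k ≤ ((2 * G + (L + μ) * D) / μ) * Real.log T := by
  set C : ℝ := (2 * G + (L + μ) * D) / μ with hC
  have hCpos : 0 < C := by
    apply div_pos _ hμ
    nlinarith
  -- all t k with 1 ≤ k ≤ N are at least 1
  have h1 : ∀ k, 1 ≤ k → k ≤ N → (1:ℝ) ≤ t k := by
    intro k
    induction k with
    | zero => omega
    | succ n ih =>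
      intro _ hn
      rcases Nat.eq_zero_or_pos n with h0 | hpos
      · subst h0; exact ht1
      · have hlt := hmono n (Finset.mem_Icc.mpr ⟨hpos, by omega⟩)
        have := ih hpos (by omega)
        linarith
  -- per-term bound
  have key : ∀ k ∈ Finset.Icc 1 (N-1),
      δ k ≤ C * (Real.log (t (k+1)) - Real.log (t k)) := by
    intro k hk
    obtain ⟨hk1, hk2⟩ := Finset.mem_Icc.mp hk
    obtain ⟨hδ0, hδD⟩ := hδ k hk
    have htk : (1:ℝ) ≤ t k := h1 k hk1 (by omega)
    have hden : (0:ℝ) < 2*G + L*δ k := by positivity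
    set r := μ * δ k / (2*G + L*δ k) with hr
    have hr0 : 0 < r := by positivity
    have htk1 : (0:ℝ) < t (k+1) := by
      have := hrec k hk; nlinarith
    have hlog1 : Real.log (t k) + Real.log (1+r) ≤ Real.log (t (k+1)) := by
      have h := Real.log_le_log (by positivity) (hrec k hk)
      rwa [Real.log_mul (by linarith) (by positivity)] at h
    have hlog2 : r / (1+r) ≤ Real.log (1+r) := by
      have h := Real.log_le_sub_one_of_pos (x := 1/(1+r)) (by positivity)
      rw [Real.log_div one_ne_zero (by positivity), Real.log_one] at h
      have h1r : (0:ℝ) < 1 + r := by linarith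
      have : -Real.log (1+r) ≤ 1/(1+r) - 1 := by linarith
      have h2 : 1/(1+r) - 1 = -(r/(1+r)) := by field_simp; ring
      linarith [h2 ▸ this]
    have hfrac : δ k / C ≤ r / (1+r) := by
      have h1r : (0:ℝ) < 1 + r := by linarith
      have hrval : r / (1+r) = μ * δ k / (2*G + (L+μ) * δ k) := by
        rw [hr]; field_simp; ring
      rw [hrval, hC, div_div_eq_mul_div, mul_comm]
      gcongr
    have hδC : δ k ≤ C * Real.log (1+r) := by
      have := hfrac.trans hlog2
      calc δ k = C * (δ k / C) := by field_simp
        _ ≤ C * Real.log (1+r) := by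
            exact mul_le_mul_of_nonneg_left this hCpos.le
    calc δ k ≤ C * Real.log (1+r) := hδC
      _ ≤ C * (Real.log (t (k+1)) - Real.log (t k)) := by
          apply mul_le_mul_of_nonneg_left _ hCpos.le
          linarith
  -- telescope
  have htel : ∑ k ∈ Finset.Icc 1 (N-1), (Real.log (t (k+1)) - Real.log (t k))
      = Real.log (t N) - Real.log (t 1) := by
    have hIcc : Finset.Icc 1 (N-1) = Finset.Ico 1 N := by
      ext x; simp only [Finset.mem_Icc, Finset.mem_Ico]; omega
    have hNs : N - 1 + 1 = N := by omega
    rw [hIcc, Finset.sum_Ico_eq_sum_range]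
    calc ∑ i ∈ Finset.range (N-1), (Real.log (t (1+i+1)) - Real.log (t (1+i)))
        = ∑ i ∈ Finset.range (N-1),
            ((fun j => Real.log (t (j+1))) (i+1) - (fun j => Real.log (t (j+1))) i) := by
          refine Finset.sum_congr rfl fun i _ => ?_
          rw [Nat.add_comm 1 i]
      _ = Real.log (t (N-1+1)) - Real.log (t 1) :=
          Finset.sum_range_sub (fun j => Real.log (t (j+1))) (N-1)
      _ = Real.log (t N) - Real.log (t 1) := by rw [hNs]
  have hsum : ∑ k ∈ Finset.Icc 1 (N-1), δ k
      ≤ C * (Real.log (t N) - Real.log (t 1)) := by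
    calc ∑ k ∈ Finset.Icc 1 (N-1), δ k
        ≤ ∑ k ∈ Finset.Icc 1 (N-1), C * (Real.log (t (k+1)) - Real.log (t k)) :=
          Finset.sum_le_sum key
      _ = C * (Real.log (t N) - Real.log (t 1)) := by rw [← Finset.mul_sum, htel]
  have hlogT : Real.log (t N) - Real.log (t 1) ≤ Real.log T := by
    have hl1 : 0 ≤ Real.log (t 1) := Real.log_nonneg ht1
    have h2 : Real.log (t N) ≤ Real.log T := Real.log_le_log (by linarith [h1 N hN le_rfl]) htN
    linarith
  calc ∑ k ∈ Finset.Icc 1 (N-1), δ k ≤ C * (Real.log (t N) - Real.log (t 1)) := hsum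
    _ ≤ C * Real.log T := mul_le_mul_of_nonneg_left hlogT hCpos.le
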